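/- If x* is an optimal solution of the problem of minimizing a continuously differentiable function f : ℝ^n → ℝ over the set C_s = {x : ‖x‖₀ ≤ s}, then x* is a basic feasible vector: if ‖x*‖₀ < s then ∇f(x*) = 0, and if ‖x*‖₀ = s then ∇ᵢf(x*) = 0 for every index i in the support of x*. -/

import Mathlib

noncomputable section
open scoped RealInnerProductSpace

/-- the number of nonzero components of `x` -/
def norm0 {n : ℕ} (x : EuclideanSpace ℝ (Fin n)) : ℕ :=
  (Finset.univ.filter fun i => x i ≠ 0).card

/-- the sparsity constraint set `C_s` -/
def Cs (n s : ℕ) : Set (EuclideanSpace ℝ (Fin n)) := {x | norm0 x ≤ s}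

/-- the set-valued Euclidean projection onto `Cs n s` -/
def projCs (n s : ℕ) (w : EuclideanSpace ℝ (Fin n)) : Set (EuclideanSpace ℝ (Fin n)) :=
  {y | y ∈ Cs n s ∧ ∀ z ∈ Cs n s, ‖y - w‖ ≤ ‖z - w‖}

/-- the s-th largest absolute value of a component of `x` -/
def Msval {n : ℕ} (s : ℕ) (x : EuclideanSpace ℝ (Fin n)) : ℝ :=
  (((List.ofFn fun i => |x i|).mergeSort (· ≥ ·)).getD (s - 1) 0)

lemma supp_subset_aux {n : ℕ} (xs : EuclideanSpace ℝ (Fin n)) (i : Fin n) (t : ℝ) :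
    (Finset.univ.filter fun j =>
      ((xs + t • EuclideanSpace.single i (1:ℝ) : EuclideanSpace ℝ (Fin n))) j ≠ 0) ⊆
      insert i (Finset.univ.filter fun j => xs j ≠ 0) := by
  intro j hj
  simp only [Finset.mem_filter, Finset.mem_univ, true_and] at hj
  by_cases hji : j = i
  · simp [hji]
  · simp only [Finset.mem_insert, Finset.mem_filter, Finset.mem_univ, true_and]
    right
    intro h0
    apply hj
    simp [PiLp.add_apply, PiLp.smul_apply, EuclideanSpace.single_apply, hji, h0]

lemma grad_coord_zero {n s : ℕ}
    (f : EuclideanSpace ℝ (Fin n) → ℝ) (hf : ContDiff ℝ 1 f)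
    (xs : EuclideanSpace ℝ (Fin n)) (hxs : xs ∈ Cs n s)
    (hopt : ∀ x ∈ Cs n s, f xs ≤ f x) (i : Fin n)
    (hi : norm0 xs < s ∨ xs i ≠ 0) : gradient f xs i = 0 := by
  set v : EuclideanSpace ℝ (Fin n) := EuclideanSpace.single i 1 with hv
  -- feasibility of xs + t • v
  have hfeas : ∀ t : ℝ, (xs + t • v) ∈ Cs n s := by
    intro t
    have hsub := supp_subset_aux xs i t
    have hcard := Finset.card_le_card hsub
    rcases hi with h | h
    · refine le_trans hcard ?_
      refine le_trans (Finset.card_insert_le _ _) ?_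
      simp only [norm0] at h
      omega
    · have : i ∈ (Finset.univ.filter fun j => xs j ≠ 0) := by
        simp [h]
      rw [Finset.insert_eq_self.2 this] at hcard
      exact le_trans hcard hxs
  -- derivative of t ↦ f (xs + t • v) at 0
  have hc : HasDerivAt (fun t : ℝ => xs + t • v) v 0 := by
    have : HasDerivAt (fun t : ℝ => t • v) ((1 : ℝ) • v) 0 :=
      (hasDerivAt_id (0 : ℝ)).smul_const v
    simpa using this.const_add xs
  have hF : HasFDerivAt f (fderiv ℝ f xs) xs :=
    ((hf.differentiable one_ne_zero) xs).hasFDerivAt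
  have hF0 : HasFDerivAt f (fderiv ℝ f xs) ((fun t : ℝ => xs + t • v) 0) := by
    simpa using hF
  have hcomp : HasDerivAt (fun t : ℝ => f (xs + t • v)) (fderiv ℝ f xs v) 0 :=
    hF0.comp_hasDerivAt 0 hc
  have hmin : IsLocalMin (fun t : ℝ => f (xs + t • v)) 0 := by
    refine Filter.Eventually.of_forall fun t => ?_
    simpa using hopt _ (hfeas t)
  have hzero : fderiv ℝ f xs v = 0 := hmin.hasDerivAt_eq_zero hcomp
  have : gradient f xs i = ⟪gradient f xs, v⟫ := by
    rw [hv, EuclideanSpace.inner_single_right]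
    simp
  rw [this, gradient, InnerProductSpace.toDual_symm_apply, hzero]

/-- An optimal solution of (P) is a basic feasible vector. -/
theorem stmt0 {n s : ℕ} (hs : 0 < s) (hsn : s < n)
    (f : EuclideanSpace ℝ (Fin n) → ℝ) (hf : ContDiff ℝ 1 f)
    (xs : EuclideanSpace ℝ (Fin n)) (hxs : xs ∈ Cs n s)
    (hopt : ∀ x ∈ Cs n s, f xs ≤ f x) :
    (norm0 xs < s → gradient f xs = 0) ∧
    (norm0 xs = s → ∀ i, xs i ≠ 0 → gradient f xs i = 0) := by
  constructor
  · intro h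
    ext i
    simpa using grad_coord_zero f hf xs hxs hopt i (Or.inl h)
  · intro _ i hi
    exact grad_coord_zero f hf xs hxs hopt i (Or.inr hi)
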